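/- For packed words v and w with w a weak refinement of v, the set U(v,w) = {u packed : pack(u|v) = w} is a nonempty interval [u_0, w] in the refinement order on set compositions, where u_0 = u_0(v,w) is obtained from w by merging consecutive blocks p', p'' of w whenever all blocks of v meeting p' lie strictly to the left of those meeting p'', iterated until no merge is possible. -/

import Mathlib

/-!
STATEMENT 16: For packed words v and w with w a weak refinement of v, the set
U(v,w) = {u packed : pack(u|v) = w} is a nonempty interval [u₀, w] in the refinement
order on set compositions: there is a (coarsest) packed word u₀, itself a member of
U(v,w), coarser than w, such that for every packed word u,
  pack(u|v) = w  ↔  u₀ ≤ u and u ≤ w  (u finer than u₀ and coarser than w).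

Refinement on packed words / set compositions: `Coarsens x y` means x is coarser than y
(y refines x, i.e. each block of x is a union of consecutive blocks of y), characterized
by: y i ≤ y j → x i ≤ x j for all positions i, j.
Weak refinement of v by w: w i = w j → v i = v j (each block of v is a union of blocks
of w).
-/

/-- A word `w` is packed if its letters are exactly `{1, ..., max w}`. -/
def IsPackedWord {n : ℕ} (w : Fin n → ℕ) : Prop :=
  (∀ i, 1 ≤ w i) ∧ ∀ i, ∀ k, 1 ≤ k → k ≤ w i → ∃ j, w j = k

/-- `biPack u v` is the packed word `pack(u|v)` (lexicographic ranking of the biletters,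
top letter first). -/
def biPack {n : ℕ} (u v : Fin n → ℕ) : Fin n → ℕ := fun i =>
  ((Finset.univ.image fun j => (u j, v j)).filter
    (fun p => p.1 < u i ∨ (p.1 = u i ∧ p.2 ≤ v i))).card

/-- `Coarsens x y`: the set composition of x is coarser than that of y; equivalently
y refines x (each block of x is a union of consecutive blocks of y). -/
def Coarsens {n : ℕ} (x y : Fin n → ℕ) : Prop :=
  ∀ i j, y i ≤ y j → x i ≤ x j

namespace U16

open Finset
open scoped Classical

/-- Lexicographic (top letter first) order on biletters. -/
def PLe (p q : ℕ × ℕ) : Prop := p.1 < q.1 ∨ (p.1 = q.1 ∧ p.2 ≤ q.2)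

lemma ple_refl (p : ℕ × ℕ) : PLe p p := Or.inr ⟨rfl, le_refl _⟩

lemma ple_trans {p q r : ℕ × ℕ} (h1 : PLe p q) (h2 : PLe q r) : PLe p r := by
  unfold PLe at *; omega

lemma ple_total (p q : ℕ × ℕ) : PLe p q ∨ PLe q p := by
  unfold PLe; omega

lemma ple_antisymm {p q : ℕ × ℕ} (h1 : PLe p q) (h2 : PLe q p) : p = q := by
  unfold PLe at *
  obtain ⟨a, b⟩ := p; obtain ⟨c, d⟩ := q
  simp only [Prod.mk.injEq]
  omega

variable {n : ℕ}

/-- The filter set whose cardinality is `biPack u v i`. -/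
noncomputable def S (u v : Fin n → ℕ) (i : Fin n) : Finset (ℕ × ℕ) :=
  (Finset.univ.image fun j => (u j, v j)).filter (fun p => PLe p (u i, v i))

lemma biPack_eq_cardS (u v : Fin n → ℕ) (i : Fin n) : biPack u v i = (S u v i).card := by
  unfold biPack S
  congr 1
  ext p
  exact ⟨fun h => Finset.mem_filter.mpr (Finset.mem_filter.mp h), fun h => Finset.mem_filter.mpr (Finset.mem_filter.mp h)⟩

lemma mem_S {u v : Fin n → ℕ} {i : Fin n} {p : ℕ × ℕ} :
    p ∈ S u v i ↔ (∃ j, (u j, v j) = p) ∧ PLe p (u i, v i) := by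
  simp [S, Finset.mem_filter, Finset.mem_image]

lemma self_mem_S (u v : Fin n → ℕ) (i : Fin n) : (u i, v i) ∈ S u v i :=
  mem_S.mpr ⟨⟨i, rfl⟩, ple_refl _⟩

/-- Forward half of the characterization: if `biPack u v = w` then the biletter order
agrees with the order of `w`-values. -/
lemma lex_iff_of_biPack {u v w : Fin n → ℕ} (h : biPack u v = w) (i j : Fin n) :
    PLe (u i, v i) (u j, v j) ↔ w i ≤ w j := by
  have hc : ∀ i, (S u v i).card = w i := by
    intro i; rw [← biPack_eq_cardS, h]
  constructor
  · intro hle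
    rw [← hc i, ← hc j]
    exact Finset.card_le_card (fun p hp => by
      rcases mem_S.mp hp with ⟨hex, hple⟩
      exact mem_S.mpr ⟨hex, ple_trans hple hle⟩)
  · intro hwle
    by_contra hnle
    have hji : PLe (u j, v j) (u i, v i) := (ple_total _ _).resolve_left hnle
    have hsub : S u v j ⊆ S u v i := fun p hp => by
      rcases mem_S.mp hp with ⟨hex, hple⟩
      exact mem_S.mpr ⟨hex, ple_trans hple hji⟩
    have hmem : (u i, v i) ∈ S u v i := self_mem_S u v i
    have hnmem : (u i, v i) ∉ S u v j := fun hmem' => hnle (mem_S.mp hmem').2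
    have hlt : (S u v j).card < (S u v i).card :=
      Finset.card_lt_card ⟨hsub, fun hsub' => hnmem (hsub' hmem)⟩
    rw [hc i, hc j] at hlt
    omega

/-- Converse half: if the biletter order agrees with the order of `w`-values and `w`
is packed, then `biPack u v = w`. -/
lemma biPack_eq_of_lex_iff {u v w : Fin n → ℕ} (hw : IsPackedWord w)
    (h : ∀ i j, PLe (u i, v i) (u j, v j) ↔ w i ≤ w j) : biPack u v = w := by
  funext i
  rw [biPack_eq_cardS]
  -- pick a representative position for each w-value
  have hrep : ∀ k, 1 ≤ k → k ≤ w i → ∃ j, w j = k := fun k hk1 hk2 => hw.2 i k hk1 hk2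
  set g : ℕ → Fin n := fun k => if hk : ∃ j : Fin n, w j = k then hk.choose else i with hg
  have hgw : ∀ k, 1 ≤ k → k ≤ w i → w (g k) = k := by
    intro k hk1 hk2
    have hk : ∃ j : Fin n, w j = k := hrep k hk1 hk2
    simp only [hg, dif_pos hk]
    exact hk.choose_spec
  have key : (Finset.Icc 1 (w i)).card = (S u v i).card := by
    apply Finset.card_bij (fun k _ => (u (g k), v (g k)))
    · intro k hk
      simp only [Finset.mem_Icc] at hk
      have hwgk : w (g k) = k := hgw k hk.1 hk.2
      refine mem_S.mpr ⟨⟨g k, rfl⟩, ?_⟩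
      exact (h (g k) i).mpr (by omega)
    · intro k1 hk1 k2 hk2 heq
      simp only [Finset.mem_Icc] at hk1 hk2
      have h1 : w (g k1) = k1 := hgw k1 hk1.1 hk1.2
      have h2 : w (g k2) = k2 := hgw k2 hk2.1 hk2.2
      have e1 : PLe (u (g k1), v (g k1)) (u (g k2), v (g k2)) := heq ▸ ple_refl _
      have e2 : PLe (u (g k2), v (g k2)) (u (g k1), v (g k1)) := heq ▸ ple_refl _
      have := (h (g k1) (g k2)).mp e1
      have := (h (g k2) (g k1)).mp e2
      omega
    · intro p hp
      rcases mem_S.mp hp with ⟨⟨j, hj⟩, hple⟩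
      have hji : w j ≤ w i := (h j i).mp (hj ▸ hple)
      have hj1 : 1 ≤ w j := hw.1 j
      refine ⟨w j, Finset.mem_Icc.mpr ⟨hj1, hji⟩, ?_⟩
      have hwg : w (g (w j)) = w j := hgw (w j) hj1 hji
      have e1 : PLe (u (g (w j)), v (g (w j))) (u j, v j) := (h _ _).mpr (le_of_eq hwg)
      have e2 : PLe (u j, v j) (u (g (w j)), v (g (w j))) := (h _ _).mpr (ge_of_eq hwg)
      rw [← hj]
      exact ple_antisymm e1 e2
  rw [← key, Nat.card_Icc]
  omega

/-- Boundary between blocks `k` and `k+1` of `w` is broken (cannot be merged). -/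
def Broken (v w : Fin n → ℕ) (k : ℕ) : Prop :=
  ∃ i j : Fin n, w i = k ∧ w j = k + 1 ∧ v j ≤ v i

/-- The merged value function. -/
noncomputable def fB (v w : Fin n → ℕ) (m : ℕ) : ℕ :=
  1 + ((Finset.Ico 1 m).filter (fun k => Broken v w k)).card

lemma fB_mono (v w : Fin n → ℕ) {a b : ℕ} (hab : a ≤ b) : fB v w a ≤ fB v w b := by
  unfold fB
  have : (Finset.Ico 1 a).filter (fun k => Broken v w k) ⊆
      (Finset.Ico 1 b).filter (fun k => Broken v w k) :=
    Finset.filter_subset_filter _ (Finset.Ico_subset_Ico le_rfl hab)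
  have := Finset.card_le_card this
  omega

lemma fB_lt_of_broken (v w : Fin n → ℕ) {a b k : ℕ} (ha : 1 ≤ a) (h1 : a ≤ k)
    (h2 : k < b) (hbk : Broken v w k) : fB v w a < fB v w b := by
  unfold fB
  have hsub : (Finset.Ico 1 a).filter (fun k => Broken v w k) ⊆
      (Finset.Ico 1 b).filter (fun k => Broken v w k) :=
    Finset.filter_subset_filter _ (Finset.Ico_subset_Ico le_rfl (by omega))
  have hmem : k ∈ (Finset.Ico 1 b).filter (fun k => Broken v w k) := by
    simp only [Finset.mem_filter, Finset.mem_Ico]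
    exact ⟨⟨by omega, h2⟩, hbk⟩
  have hnmem : k ∉ (Finset.Ico 1 a).filter (fun k => Broken v w k) := by
    simp only [Finset.mem_filter, Finset.mem_Ico]
    omega
  have := Finset.card_lt_card ⟨hsub, fun hs => hnmem (hs hmem)⟩
  omega

/-- If no boundary between `w i` and `w j` is broken, then `v` respects the order. -/
lemma chain {v w : Fin n → ℕ} (hw : IsPackedWord w)
    (hwr : ∀ i j, w i = w j → v i = v j) :
    ∀ d : ℕ, ∀ i j : Fin n, w j = w i + d →
      (∀ k, w i ≤ k → k < w j → ¬ Broken v w k) →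
      v i ≤ v j ∧ (0 < d → v i < v j) := by
  intro d
  induction d with
  | zero =>
    intro i j hji _
    exact ⟨le_of_eq (hwr i j (by omega)), by omega⟩
  | succ d ih =>
    intro i j hji hnb
    obtain ⟨j', hj'⟩ := hw.2 j (w i + d) (by have := hw.1 i; omega) (by omega)
    have h1 : v i ≤ v j' := (ih i j' hj' (fun k hk1 hk2 => hnb k hk1 (by omega))).1
    have h2 : v j' < v j := by
      have hnb' := hnb (w i + d) (by omega) (by omega)
      by_contra hle
      exact hnb' ⟨j', j, by omega, by omega, by omega⟩
    refine ⟨by omega, fun _ => by omega⟩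

lemma unbroken_of_fB_le {v w : Fin n → ℕ} {i j : Fin n} (hw : IsPackedWord w)
    (hij : w i ≤ w j) (hf : fB v w (w j) ≤ fB v w (w i)) :
    ∀ k, w i ≤ k → k < w j → ¬ Broken v w k := by
  intro k hk1 hk2 hbk
  have := fB_lt_of_broken v w (hw.1 i) hk1 hk2 hbk
  omega

lemma fB_le_of_unbroken (v w : Fin n → ℕ) {a b : ℕ}
    (hab : a ≤ b) (h : ∀ k, a ≤ k → k < b → ¬ Broken v w k) : fB v w b ≤ fB v w a := by
  unfold fB
  have hsub : (Finset.Ico 1 b).filter (fun k => Broken v w k) ⊆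
      (Finset.Ico 1 a).filter (fun k => Broken v w k) := by
    intro k hk
    simp only [Finset.mem_filter, Finset.mem_Ico] at hk ⊢
    refine ⟨⟨hk.1.1, ?_⟩, hk.2⟩
    by_contra hka
    exact h k (by omega) hk.1.2 hk.2
  have := Finset.card_le_card hsub
  omega

/-- Intermediate values of fB are attained. -/
lemma fB_surj (v w : Fin n → ℕ) :
    ∀ m, 1 ≤ m → ∀ k, 1 ≤ k → k ≤ fB v w m → ∃ m', 1 ≤ m' ∧ m' ≤ m ∧ fB v w m' = k := by
  intro m hm
  induction m, hm using Nat.le_induction with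
  | base =>
    intro k hk1 hk2
    have h1 : fB v w 1 = 1 := by unfold fB; simp
    exact ⟨1, le_rfl, le_rfl, by omega⟩
  | succ m hm ih =>
    intro k hk1 hk2
    by_cases hkm : k ≤ fB v w m
    · obtain ⟨m', h1, h2, h3⟩ := ih k hk1 hkm
      exact ⟨m', h1, by omega, h3⟩
    · refine ⟨m + 1, by omega, le_rfl, ?_⟩
      have hstep : fB v w (m + 1) ≤ fB v w m + 1 := by
        unfold fB
        have : (Finset.Ico 1 (m+1)).filter (fun k => Broken v w k) ⊆
            insert m ((Finset.Ico 1 m).filter (fun k => Broken v w k)) := by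
          intro x hx
          simp only [Finset.mem_filter, Finset.mem_Ico, Finset.mem_insert] at hx ⊢
          by_cases hxm : x = m
          · exact Or.inl hxm
          · exact Or.inr ⟨⟨hx.1.1, by omega⟩, hx.2⟩
        have h1 := Finset.card_le_card this
        have h2 := Finset.card_insert_le m ((Finset.Ico 1 m).filter (fun k => Broken v w k))
        omega
      omega

end U16

theorem U_is_interval (n : ℕ) (v w : Fin n → ℕ)
    (hv : IsPackedWord v) (hw : IsPackedWord w)
    (hwr : ∀ i j, w i = w j → v i = v j) :
    ∃ u₀ : Fin n → ℕ, IsPackedWord u₀ ∧ Coarsens u₀ w ∧ biPack u₀ v = w ∧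
      ∀ u : Fin n → ℕ, IsPackedWord u →
        (biPack u v = w ↔ (Coarsens u₀ u ∧ Coarsens u w)) := by
  classical
  refine ⟨fun i => U16.fB v w (w i), ?_, ?_, ?_, ?_⟩
  · -- u₀ is packed
    constructor
    · intro i
      show 1 ≤ U16.fB v w (w i)
      unfold U16.fB
      omega
    · intro i k hk1 hk2
      obtain ⟨m', hm1, hm2, hm3⟩ := U16.fB_surj v w (w i) (hw.1 i) k hk1 hk2
      obtain ⟨j, hj⟩ := hw.2 i m' hm1 hm2
      refine ⟨j, ?_⟩
      show U16.fB v w (w j) = k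
      rw [hj]
      exact hm3
  · -- Coarsens u₀ w
    intro i j hij
    exact U16.fB_mono v w hij
  · -- biPack u₀ v = w
    apply U16.biPack_eq_of_lex_iff hw
    intro i j
    constructor
    · intro hple
      simp only [U16.PLe] at hple
      rcases hple with h | ⟨h1, h2⟩
      · by_contra hn
        have h' : U16.fB v w (w i) < U16.fB v w (w j) := h
        have := U16.fB_mono v w (show w j ≤ w i by omega)
        omega
      · by_contra hn
        push_neg at hn
        have h1' : U16.fB v w (w i) = U16.fB v w (w j) := h1
        have hub := U16.unbroken_of_fB_le (i := j) (j := i) hw (le_of_lt hn) (le_of_eq h1')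
        have := (U16.chain hw hwr (w i - w j) j i (by omega) hub).2 (by omega)
        omega
    · intro hwij
      have hle := U16.fB_mono v w hwij
      rcases lt_or_eq_of_le hle with h | h
      · exact Or.inl h
      · have hub := U16.unbroken_of_fB_le hw hwij (le_of_eq h.symm)
        have hv2 := (U16.chain hw hwr (w j - w i) i j (by omega) hub).1
        exact Or.inr ⟨h, hv2⟩
  · -- the interval characterization
    intro u hu
    constructor
    · intro hb
      have L := fun i j => U16.lex_iff_of_biPack hb i j
      have humono : ∀ x y : Fin n, w x ≤ w y → u x ≤ u y := by
        intro x y hxy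
        have := (L x y).mpr hxy
        simp only [U16.PLe] at this
        omega
      refine ⟨?_, ?_⟩
      · -- Coarsens u₀ u
        intro i j hij
        simp only
        by_cases hwij : w i ≤ w j
        · exact U16.fB_mono v w hwij
        · push_neg at hwij
          apply U16.fB_le_of_unbroken v w (le_of_lt hwij)
          intro k hk1 hk2 hbk
          obtain ⟨a, b, hwa, hwb, hvba⟩ := hbk
          have hab : U16.PLe (u a, v a) (u b, v b) := (L a b).mpr (by omega)
          have hnba : ¬ U16.PLe (u b, v b) (u a, v a) := fun hx => by
            have := (L b a).mp hx; omega
          have huab : u a < u b := by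
            simp only [U16.PLe] at hab hnba
            omega
          have h1 : u j ≤ u a := humono j a (by omega)
          have h2 : u b ≤ u i := humono b i (by omega)
          omega
      · -- Coarsens u w
        exact humono
    · rintro ⟨hc, hcw⟩
      apply U16.biPack_eq_of_lex_iff hw
      intro i j
      constructor
      · intro hple
        by_contra hn
        push_neg at hn
        have huji : u j ≤ u i := hcw j i (le_of_lt hn)
        simp only [U16.PLe] at hple
        rcases hple with h | ⟨h1, h2⟩
        · omega
        · have e1 : U16.fB v w (w i) ≤ U16.fB v w (w j) := hc i j (by omega)
          have hub := U16.unbroken_of_fB_le (i := j) (j := i) hw (le_of_lt hn) e1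
          have := (U16.chain hw hwr (w i - w j) j i (by omega) hub).2 (by omega)
          omega
      · intro hwij
        have huij : u i ≤ u j := hcw i j hwij
        rcases lt_or_eq_of_le huij with h | h
        · exact Or.inl h
        · have e2 : U16.fB v w (w j) ≤ U16.fB v w (w i) := hc j i (le_of_eq h.symm)
          have hub := U16.unbroken_of_fB_le hw hwij e2
          have hv2 := (U16.chain hw hwr (w j - w i) i j (by omega) hub).1
          exact Or.inr ⟨h, hv2⟩
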